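/- arXiv:1905.08364 — 2 statements merged into one kernel-verified Lean document; each statement's English description precedes it below -/
import Mathlib

section
/- Sauer–Shelah lemma: if a class P of Boolean-valued functions has VC dimension d, then for every finite set S of m points, the number of realizable dichotomies of S is at most the sum over i = 0 to d of binomial(m, i). -/
/-- The realizable dichotomies of a finite set `S` by a class `P` of Boolean-valued functions. -/
def dichotomies {X : Type*} (P : Set (X → Bool)) (S : Finset X) : Set (↥S → Bool) :=
  {f | ∃ p ∈ P, ∀ x : ↥S, p x = f x}

/-- `P` shatters a finite set `S`: every dichotomy of `S` is realized by some member of `P`. -/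
def Shatters {X : Type*} (P : Set (X → Bool)) (S : Finset X) : Prop :=
  ∀ f : X → Bool, ∃ p ∈ P, ∀ x ∈ S, p x = f x

/-- Sauer–Shelah lemma. -/
theorem stmt_4 {X : Type*} (P : Set (X → Bool)) (d : ℕ)
    (hVC : ∀ S : Finset X, S.card = d + 1 → ¬ Shatters P S)
    (m : ℕ) (S : Finset X) (hS : S.card = m) :
    Nat.card (dichotomies P S) ≤ ∑ i ∈ Finset.range (d + 1), m.choose i := by
  classical
  have hcard : Fintype.card ↥S = m := by simp [hS]
  -- finite set of dichotomies
  set F : Finset (↥S → Bool) := (Set.toFinite (dichotomies P S)).toFinset with hF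
  have hNat : Nat.card (dichotomies P S) = F.card := by
    rw [hF, Nat.card_coe_set_eq, Set.ncard_eq_toFinset_card _ (Set.toFinite _)]
  -- translate to set family
  set 𝒜 : Finset (Finset ↥S) := F.image (fun f => Finset.univ.filter (fun x => f x = true))
    with h𝒜
  have hinj : Set.InjOn (fun f : ↥S → Bool => Finset.univ.filter (fun x => f x = true)) F := by
    intro f hf g hg h
    funext x
    have := Finset.ext_iff.1 h x
    simp only [Finset.mem_filter, Finset.mem_univ, true_and] at this
    cases hfx : f x <;> cases hgx : g x <;> simp_all
  have hcard𝒜 : F.card = 𝒜.card := (Finset.card_image_of_injOn hinj).symm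
  -- every set shattered by 𝒜 has card ≤ d
  have hshat : ∀ s : Finset ↥S, Finset.Shatters 𝒜 s → s.card ≤ d := by
    intro s hs
    by_contra hlt
    push_neg at hlt
    obtain ⟨s', hs's, hs'card⟩ := Finset.exists_subset_card_eq hlt
    have hs' : Finset.Shatters 𝒜 s' := hs.mono_right hs's
    refine hVC (s'.image Subtype.val) ?_ ?_
    · rw [Finset.card_image_of_injective _ Subtype.val_injective, hs'card]
    · intro f
      obtain ⟨u, hu, hsu⟩ := hs' (t := s'.filter (fun x => f x.val = true))
        (Finset.filter_subset _ _)
      rw [h𝒜, Finset.mem_image] at hu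
      obtain ⟨g, hgF, rfl⟩ := hu
      rw [hF, Set.Finite.mem_toFinset] at hgF
      obtain ⟨p, hpP, hpg⟩ := hgF
      refine ⟨p, hpP, ?_⟩
      intro x hx
      rw [Finset.mem_image] at hx
      obtain ⟨x', hx', rfl⟩ := hx
      have h1 := Finset.ext_iff.1 hsu x'
      simp only [Finset.mem_inter, Finset.mem_filter, Finset.mem_univ, true_and, hx',
        true_and] at h1
      have h2 := hpg x'
      cases hgx : g x' <;> cases hfx : f x'.val <;> simp_all
  -- shatterer is contained in small sets
  have hsub : 𝒜.shatterer ⊆ (Finset.range (d + 1)).biUnion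
      (fun k => Finset.powersetCard k (Finset.univ : Finset ↥S)) := by
    intro s hs
    rw [Finset.mem_shatterer] at hs
    refine Finset.mem_biUnion.2 ⟨s.card, Finset.mem_range.2 (Nat.lt_succ_of_le (hshat s hs)),
      Finset.mem_powersetCard_univ.2 rfl⟩
  calc Nat.card (dichotomies P S) = 𝒜.card := by rw [hNat, hcard𝒜]
    _ ≤ 𝒜.shatterer.card := Finset.card_le_card_shatterer 𝒜
    _ ≤ ((Finset.range (d + 1)).biUnion
        (fun k => Finset.powersetCard k (Finset.univ : Finset ↥S))).card :=
        Finset.card_le_card hsub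
    _ ≤ ∑ k ∈ Finset.range (d + 1), (Finset.powersetCard k (Finset.univ : Finset ↥S)).card :=
        Finset.card_biUnion_le
    _ = ∑ i ∈ Finset.range (d + 1), m.choose i := by
        simp [Finset.card_powersetCard, hcard, hS]
end

section
/- If a class P of Boolean-valued functions has finite VC dimension d ≥ 1, then its growth function Π_P(m) is O(m^d); specifically Π_P(m) ≤ (e·m/d)^d for all m ≥ d. -/
/-- The growth function: maximum number of realizable dichotomies over `m`-element sets. -/
noncomputable def growth {X : Type*} (P : Set (X → Bool)) (m : ℕ) : ℕ :=
  sSup {n | ∃ S : Finset X, S.card = m ∧ Nat.card (dichotomies P S) = n}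


lemma sum_choose_le_real (d m : ℕ) (hd : 1 ≤ d) (hdm : d ≤ m) :
    (∑ k ∈ Finset.Iic d, (m.choose k : ℝ)) ≤ (Real.exp 1 * m / d) ^ d := by
  have hm0 : 1 ≤ m := le_trans hd hdm
  have hm : (0:ℝ) < m := by exact_mod_cast hm0
  have hdR : (0:ℝ) < d := by exact_mod_cast hd
  set x : ℝ := (d : ℝ) / m with hxdef
  have hx0 : 0 < x := by positivity
  have hx1 : x ≤ 1 := by
    rw [div_le_one hm]; exact_mod_cast hdm
  have key : (∑ k ∈ Finset.Iic d, (m.choose k : ℝ)) * x ^ d ≤ Real.exp d := by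
    calc (∑ k ∈ Finset.Iic d, (m.choose k : ℝ)) * x ^ d
        = ∑ k ∈ Finset.Iic d, (m.choose k : ℝ) * x ^ d := by rw [Finset.sum_mul]
      _ ≤ ∑ k ∈ Finset.Iic d, (m.choose k : ℝ) * x ^ k := by
          refine Finset.sum_le_sum fun k hk => ?_
          have hkd : k ≤ d := Finset.mem_Iic.mp hk
          have := pow_le_pow_of_le_one hx0.le hx1 hkd
          exact mul_le_mul_of_nonneg_left this (by positivity)
      _ ≤ ∑ k ∈ Finset.range (m + 1), (m.choose k : ℝ) * x ^ k := by
          refine Finset.sum_le_sum_of_subset_of_nonneg ?_ fun k _ _ => by positivity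
          intro k hk
          simp only [Finset.mem_Iic] at hk
          exact Finset.mem_range.mpr (by omega)
      _ = (x + 1) ^ m := by
          rw [add_pow]
          exact Finset.sum_congr rfl fun k hk => by ring
      _ ≤ Real.exp x ^ m := by
          refine pow_le_pow_left₀ (by positivity) ?_ m
          linarith [Real.add_one_le_exp x]
      _ = Real.exp (x * m) := by rw [← Real.exp_nat_mul, mul_comm]
      _ = Real.exp d := by rw [hxdef, div_mul_cancel₀]; exact ne_of_gt hm
  have hxd : 0 < x ^ d := by positivity
  rw [← le_div_iff₀ hxd] at key
  refine key.trans_eq ?_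
  have he : Real.exp (d:ℝ) = Real.exp 1 ^ d := by
    rw [← Real.exp_nat_mul]; norm_num
  rw [he, hxdef]
  have hdne : (d:ℝ) ≠ 0 := ne_of_gt hdR
  have hmne : (m:ℝ) ≠ 0 := ne_of_gt hm
  field_simp
  rw [← mul_pow]; congr 1; rw [div_mul_div_comm, eq_div_iff (mul_ne_zero hmne hdne)]; ring



lemma card_dichotomies_le {X : Type*} (P : Set (X → Bool)) (d : ℕ)
    (hVC : ∀ S : Finset X, S.card = d + 1 → ¬ Shatters P S) (S : Finset X) :
    Nat.card (dichotomies P S) ≤ ∑ k ∈ Finset.Iic d, S.card.choose k := by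
  classical
  have hfin : (dichotomies P S).Finite := Set.toFinite _
  set D : Finset (↥S → Bool) := hfin.toFinset with hD
  have hcard : Nat.card (dichotomies P S) = D.card := by
    rw [Nat.card_eq_card_finite_toFinset]
  set Φ : (↥S → Bool) → Finset ↥S := fun g => Finset.univ.filter (fun y => g y = true) with hΦ
  have hΦinj : Function.Injective Φ := by
    intro g g' h
    funext y
    have : (y ∈ Φ g) ↔ (y ∈ Φ g') := by rw [h]
    simp only [hΦ, Finset.mem_filter, Finset.mem_univ, true_and] at this
    exact Bool.eq_iff_iff.mpr this
  set 𝒜 : Finset (Finset ↥S) := D.image Φ with h𝒜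
  have hcard2 : D.card = 𝒜.card := (Finset.card_image_of_injective D hΦinj).symm
  have hvc : 𝒜.vcDim ≤ d := by
    refine Finset.sup_le fun s hs => ?_
    rw [Finset.mem_shatterer] at hs
    by_contra hlt
    push_neg at hlt
    obtain ⟨t, hts, htcard⟩ := Finset.exists_subset_card_eq (show d + 1 ≤ s.card by omega)
    have hshat : 𝒜.Shatters t := hs.mono_right hts
    set T : Finset X := t.image Subtype.val with hT
    have hTcard : T.card = d + 1 := by
      rw [hT, Finset.card_image_of_injective _ Subtype.val_injective, htcard]
    refine hVC T hTcard ?_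
    intro f
    have hsub : Finset.filter (fun y : ↥S => f y.1 = true) t ⊆ t := Finset.filter_subset _ _
    obtain ⟨v, hv, hiv⟩ := hshat hsub
    rw [h𝒜, Finset.mem_image] at hv
    obtain ⟨g, hg, rfl⟩ := hv
    rw [hD, Set.Finite.mem_toFinset] at hg
    obtain ⟨p, hp, hpg⟩ := hg
    refine ⟨p, hp, fun x hx => ?_⟩
    rw [hT, Finset.mem_image] at hx
    obtain ⟨y, hy, rfl⟩ := hx
    rw [hpg y]
    have h1 : (g y = true) ↔ (y ∈ t ∩ Φ g) := by
      simp [hΦ, Finset.mem_inter, hy]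
    rw [hiv] at h1
    simp only [Finset.mem_filter, hy, true_and] at h1
    exact Bool.eq_iff_iff.mpr h1
  calc Nat.card (dichotomies P S) = 𝒜.card := by rw [hcard, hcard2]
    _ ≤ 𝒜.shatterer.card := Finset.card_le_card_shatterer 𝒜
    _ ≤ ∑ k ∈ Finset.Iic 𝒜.vcDim, (Fintype.card ↥S).choose k :=
        Finset.card_shatterer_le_sum_vcDim
    _ ≤ ∑ k ∈ Finset.Iic d, (Fintype.card ↥S).choose k := by
        refine Finset.sum_le_sum_of_subset ?_
        exact Finset.Iic_subset_Iic.mpr hvc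
    _ = ∑ k ∈ Finset.Iic d, S.card.choose k := by rw [Fintype.card_coe]
theorem stmt_6 {X : Type*} (P : Set (X → Bool)) (d : ℕ) (hd : 1 ≤ d)
    (hVC : ∀ S : Finset X, S.card = d + 1 → ¬ Shatters P S) :
    ∀ m : ℕ, d ≤ m → (growth P m : ℝ) ≤ (Real.exp 1 * m / d) ^ d := by
  intro m hm
  have hnat : growth P m ≤ ∑ k ∈ Finset.Iic d, m.choose k := by
    refine csSup_le' ?_
    rintro n ⟨S, hS, rfl⟩
    have := card_dichotomies_le P d hVC S
    rwa [hS] at this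
  calc (growth P m : ℝ) ≤ (∑ k ∈ Finset.Iic d, (m.choose k : ℝ)) := by
        rw [← Nat.cast_sum]; exact_mod_cast hnat
    _ ≤ (Real.exp 1 * m / d) ^ d := sum_choose_le_real d m hd hm
end
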